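/- A ring R is USC if and only if R is both CUSC and potent. -/
import Mathlib


/-- An element `a` of a ring is *uniquely strongly clean* if there is exactly one
idempotent `e` such that `a - e` is a unit and `a * e = e * a`. -/
def IsUSCleanElem {R : Type*} [Ring R] (a : R) : Prop :=
  ∃! e : R, IsIdempotentElem e ∧ IsUnit (a - e) ∧ a * e = e * a

/-- An element `a` of a ring is *uniquely clean* if there is exactly one
idempotent `e` such that `a - e` is a unit. -/
def IsUCleanElem {R : Type*} [Ring R] (a : R) : Prop :=
  ∃! e : R, IsIdempotentElem e ∧ IsUnit (a - e)

/-- An element `a` of a ring is *clean* if it is the sum of an idempotent and a unit. -/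
def IsCleanElem {R : Type*} [Ring R] (a : R) : Prop :=
  ∃ e : R, IsIdempotentElem e ∧ IsUnit (a - e)

/-- A ring is *CUSC* if every clean element is uniquely strongly clean. -/
def IsCUSC (R : Type*) [Ring R] : Prop := ∀ a : R, IsCleanElem a → IsUSCleanElem a

/-- A ring is *UUSC* if every unit is uniquely strongly clean. -/
def IsUUSC (R : Type*) [Ring R] : Prop := ∀ a : R, IsUnit a → IsUSCleanElem a

/-- A ring is *CUC* if every clean element is uniquely clean. -/
def IsCUC (R : Type*) [Ring R] : Prop := ∀ a : R, IsCleanElem a → IsUCleanElem a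

/-- A ring is *UUC* if every unit is uniquely clean. -/
def IsUUC (R : Type*) [Ring R] : Prop := ∀ a : R, IsUnit a → IsUCleanElem a

/-- A ring is *USC* if every element is uniquely strongly clean. -/
def IsUSCRing (R : Type*) [Ring R] : Prop := ∀ a : R, IsUSCleanElem a

/-- A ring is *uniquely clean* (UC) if every element is uniquely clean. -/
def IsUCRing (R : Type*) [Ring R] : Prop := ∀ a : R, IsUCleanElem a

/-- A ring is *clean* if every element is clean. -/
def IsCleanRing (R : Type*) [Ring R] : Prop := ∀ a : R, IsCleanElem a

/-- The Jacobson radical of a (possibly noncommutative) ring, as a two-sided ideal. -/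
abbrev jacobsonRad (R : Type*) [Ring R] : TwoSidedIdeal R := TwoSidedIdeal.jacobson ⊥

/-- The quotient ring `R / J(R)` of a ring by its Jacobson radical. -/
abbrev JacQuot (R : Type*) [Ring R] := (jacobsonRad R).ringCon.Quotient

/-- A ring is *semi-potent* if every one-sided (left or right) ideal not contained in the
Jacobson radical contains a nonzero idempotent.  Left ideals are `Ideal R`, right ideals
are `Rᵐᵒᵖ`-submodules of `R`. -/
def Semipotent (R : Type*) [Ring R] : Prop :=
  (∀ I : Ideal R, ¬ (I : Set R) ⊆ (jacobsonRad R : Set R) →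
      ∃ e ∈ I, e ≠ 0 ∧ IsIdempotentElem e) ∧
  (∀ I : Submodule Rᵐᵒᵖ R, ¬ (I : Set R) ⊆ (jacobsonRad R : Set R) →
      ∃ e ∈ I, e ≠ 0 ∧ IsIdempotentElem e)

/-- Idempotents lift modulo the Jacobson radical: for every `a` with `a - a ^ 2 ∈ J(R)`
there is an idempotent `e` with `a - e ∈ J(R)`. -/
def IdempotentsLiftJac (R : Type*) [Ring R] : Prop :=
  ∀ a : R, a - a ^ 2 ∈ jacobsonRad R → ∃ e : R, IsIdempotentElem e ∧ a - e ∈ jacobsonRad R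

/-- A ring is *potent* if it is semi-potent and idempotents lift modulo the Jacobson radical. -/
def Potent (R : Type*) [Ring R] : Prop := Semipotent R ∧ IdempotentsLiftJac R



section AuxUSC

def CornerU {R : Type*} [Ring R] (h v : R) : Prop :=
  h * v = v ∧ v * h = v ∧ ∃ w, h * w = w ∧ w * h = w ∧ v * w = h ∧ w * v = h

variable {R : Type*} [Ring R]

lemma myUnit_of_two {a b c : R} (h1 : a * b = 1) (h2 : c * a = 1) : IsUnit a := by
  have hcb : c = b := by
    calc c = c * (a * b) := by rw [h1, mul_one]
    _ = (c * a) * b := by rw [mul_assoc]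
    _ = b := by rw [h2, one_mul]
  exact ⟨⟨a, b, h1, hcb ▸ h2⟩, rfl⟩

lemma myUnit_of_left_inv {z a : R} (h : z * a = 1) (hz : IsUnit z) : IsUnit a := by
  obtain ⟨u, rfl⟩ := hz
  have : a = (↑u⁻¹ : R) := by
    calc a = (↑u⁻¹ * ↑u) * a := by rw [u.inv_mul, one_mul]
    _ = ↑u⁻¹ * (↑u * a) := by rw [mul_assoc]
    _ = (↑u⁻¹ : R) := by rw [h, mul_one]
  exact this ▸ u⁻¹.isUnit

lemma mem_jacRad_iff {a : R} : a ∈ jacobsonRad R ↔ ∀ y : R, IsUnit (1 + y * a) := by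
  rw [show jacobsonRad R = TwoSidedIdeal.jacobson ⊥ from rfl, TwoSidedIdeal.mem_jacobson_iff]
  constructor
  · intro h
    have key : ∀ y : R, ∃ z : R, z * (1 + y * a) = 1 := by
      intro y
      obtain ⟨z, hz⟩ := h y
      rw [TwoSidedIdeal.mem_bot, sub_eq_zero] at hz
      exact ⟨z, by rw [mul_add, mul_one, ← mul_assoc, add_comm]; exact hz⟩
    intro y
    obtain ⟨z, hz1⟩ := key y
    obtain ⟨z', hz2⟩ := key (-(z * y))
    have hzz : (1 : R) + -(z * y) * a = z := by
      have : z + z * y * a = 1 := by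
        rw [← hz1]; rw [mul_add, mul_one, ← mul_assoc]
      rw [← this]; noncomm_ring
    rw [hzz] at hz2
    exact myUnit_of_left_inv hz1 (myUnit_of_two hz1 hz2)
  · intro h y
    obtain ⟨u, hu⟩ := h y
    refine ⟨(↑u⁻¹ : R), ?_⟩
    rw [TwoSidedIdeal.mem_bot, sub_eq_zero]
    calc (↑u⁻¹ : R) * y * a + ↑u⁻¹ = ↑u⁻¹ * (1 + y * a) := by noncomm_ring
    _ = 1 := by rw [← hu, u.inv_mul]


lemma myswap {a b : R} (h : IsUnit (1 + a * b)) : IsUnit (1 + b * a) := by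
  obtain ⟨u, hu⟩ := h
  have h1 : (1 + a * b) * (↑u⁻¹ : R) = 1 := by rw [← hu]; exact u.mul_inv
  have h2 : (↑u⁻¹ : R) * (1 + a * b) = 1 := by rw [← hu]; exact u.inv_mul
  set c : R := (↑u⁻¹ : R) with hc
  have habc : a * b * c = 1 - c := by
    have := h1; rw [add_mul, one_mul] at this; exact eq_sub_of_add_eq' this
  have hcab : c * (a * b) = 1 - c := by
    have := h2; rw [mul_add, mul_one] at this; exact eq_sub_of_add_eq' this
  refine isUnit_iff_exists.mpr ⟨1 - b * c * a, ?_, ?_⟩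
  · calc (1 + b * a) * (1 - b * c * a)
        = 1 - b * c * a + b * a - b * (a * b * c) * a := by noncomm_ring
    _ = 1 := by rw [habc]; noncomm_ring
  · calc (1 - b * c * a) * (1 + b * a)
        = 1 - b * c * a + b * a - b * (c * (a * b)) * a := by noncomm_ring
    _ = 1 := by rw [hcab]; noncomm_ring

lemma unit_add_jac {u j : R} (hu : IsUnit u) (hj : j ∈ jacobsonRad R) : IsUnit (u + j) := by
  obtain ⟨v, rfl⟩ := hu
  have hcj : (↑v⁻¹ : R) * j ∈ jacobsonRad R := (jacobsonRad R).mul_mem_left _ _ hj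
  have h1 : IsUnit (1 + (↑v⁻¹ : R) * j) := by
    have := mem_jacRad_iff.mp hcj 1
    rwa [one_mul] at this
  have : (↑v : R) * (1 + (↑v⁻¹ : R) * j) = ↑v + j := by
    rw [mul_add, mul_one, ← mul_assoc, v.mul_inv, one_mul]
  rw [← this]
  exact v.isUnit.mul h1

lemma jac_sub_unit {j : R} (hj : j ∈ jacobsonRad R) : IsUnit (1 - j) := by
  have := mem_jacRad_iff.mp hj (-1)
  rwa [neg_one_mul, ← sub_eq_add_neg] at this

lemma idem_mem_jac_eq_zero {e : R} (he : IsIdempotentElem e) (hj : e ∈ jacobsonRad R) : e = 0 := by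
  obtain ⟨u, hu⟩ := jac_sub_unit hj
  have h2 : (↑u⁻¹ : R) * (1 - e) = 1 := by rw [← hu]; exact u.inv_mul
  calc e = ((↑u⁻¹ : R) * (1 - e)) * e := by rw [h2, one_mul]
  _ = (↑u⁻¹ : R) * (e - e * e) := by noncomm_ring
  _ = 0 := by rw [he.eq, sub_self, mul_zero]

lemma not_mem_jac {a : R} (h : a ∉ jacobsonRad R) : ∃ y : R, ¬ IsUnit (1 - y * a) := by
  by_contra hc
  push_neg at hc
  exact h (mem_jacRad_iff.mpr (fun y => by
    have := hc (-y); rwa [neg_mul, sub_neg_eq_add] at this))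

lemma not_mem_jac' {a : R} (h : a ∉ jacobsonRad R) : ∃ y : R, ¬ IsUnit (1 - a * y) := by
  obtain ⟨y, hy⟩ := not_mem_jac h
  refine ⟨y, fun hu => hy ?_⟩
  have h1 : IsUnit (1 + a * -y) := by rwa [mul_neg, ← sub_eq_add_neg]
  have h2 := myswap h1
  rwa [neg_mul, ← sub_eq_add_neg] at h2


def jq (R : Type*) [Ring R] : R →+* JacQuot R := RingCon.mk' _

lemma jq_surj : Function.Surjective (jq R) := fun y => Quotient.inductionOn' y (fun x => ⟨x, rfl⟩)

lemma jq_eq_zero_iff {x : R} : jq R x = 0 ↔ x ∈ jacobsonRad R := by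
  show (x : JacQuot R) = 0 ↔ _
  rw [← RingCon.coe_zero, RingCon.eq, TwoSidedIdeal.rel_iff, sub_zero]


lemma cusc_corner (hC : IsCUSC R) {h v : R} (hh : IsIdempotentElem h)
    (h1 : CornerU h v) (h2 : CornerU h (v - h)) : h = 0 := by
  obtain ⟨hv, vh, w, hw, wh, vw, wv⟩ := h1
  obtain ⟨hv2, vh2, w2, hw2, wh2, vw2, wv2⟩ := h2
  set u : R := v + (1 - h) with hu
  have hinv : u * (w + (1 - h)) = 1 ∧ (w + (1 - h)) * u = 1 := by
    constructor
    · calc u * (w + (1 - h)) = v * w + (v - v * h) + (w - h * w) + (1 - h) - (h - h * h) := by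
            rw [hu]; noncomm_ring
      _ = 1 := by rw [vw, vh, hw, hh.eq]; noncomm_ring
    · calc (w + (1 - h)) * u = w * v + (w - w * h) + (v - h * v) + (1 - h) - (h - h * h) := by
            rw [hu]; noncomm_ring
      _ = 1 := by rw [wv, wh, hv, hh.eq]; noncomm_ring
  have huu : IsUnit u := isUnit_iff_exists.mpr ⟨_, hinv.1, hinv.2⟩
  have hclean : IsCleanElem u := ⟨0, IsIdempotentElem.zero, by rwa [sub_zero]⟩
  obtain ⟨e₀, _, huniq⟩ := hC u hclean
  have p0 : (0 : R) = e₀ := huniq 0 ⟨IsIdempotentElem.zero, by rwa [sub_zero], by rw [mul_zero, zero_mul]⟩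
  have ph : h = e₀ := by
    refine huniq h ⟨hh, ?_, ?_⟩
    · have h1' : (u - h) * (w2 + (1 - h)) = 1 := by
        calc (u - h) * (w2 + (1 - h)) = (v - h) * w2 + ((v - h) - (v - h) * h) + (w2 - h * w2)
              + (1 - 2 * h + h * h) := by rw [hu]; noncomm_ring
        _ = 1 := by rw [vw2, vh2, hw2, hh.eq]; noncomm_ring
      have h2' : (w2 + (1 - h)) * (u - h) = 1 := by
        calc (w2 + (1 - h)) * (u - h) = w2 * (v - h) + (w2 - w2 * h) + ((v - h) - h * (v - h))
              + (1 - 2 * h + h * h) := by rw [hu]; noncomm_ring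
        _ = 1 := by rw [wv2, wh2, hv2, hh.eq]; noncomm_ring
      exact isUnit_iff_exists.mpr ⟨_, h1', h2'⟩
    · calc u * h = v * h + (h - h * h) := by rw [hu]; noncomm_ring
      _ = h * v + (h - h * h) := by rw [vh, hv]
      _ = h * u := by rw [hu]; noncomm_ring
  rw [ph, ← p0]

lemma corner_unit_lift {e y : R} (he : IsIdempotentElem e) (hey : e * y = y) (hye : y * e = y)
    (hq : CornerU (jq R e) (jq R y)) : CornerU e y := by
  obtain ⟨hv, vh, wq, hwq, wqh, vwq, wvq⟩ := hq
  obtain ⟨w0, hw0⟩ := jq_surj (R := R) wq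
  set w₁ : R := e * w0 * e with hw₁
  have hjw : jq R w₁ = wq := by
    rw [hw₁, map_mul, map_mul, hw0]
    rw [show jq R e * wq * jq R e = wq from by rw [hwq, wqh]]
  -- corner-inverse of an element of eRe that maps to corner-identity
  have main : ∀ z : R, e * z = z → z * e = z → jq R z = jq R e →
      ∃ c, e * c = c ∧ c * e = c ∧ z * c = e ∧ c * z = e := by
    intro z hez hze hjz
    set j : R := e - z with hj
    have hjJ : j ∈ jacobsonRad R := by
      rw [← jq_eq_zero_iff, hj, map_sub, hjz, sub_self]
    obtain ⟨t, ht⟩ := jac_sub_unit hjJ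
    have ht1 : (1 - j) * ↑t⁻¹ = 1 := by rw [← ht]; exact t.mul_inv
    have ht2 : (↑t⁻¹ : R) * (1 - j) = 1 := by rw [← ht]; exact t.inv_mul
    have hje : e * j = j := by rw [hj, mul_sub, he.eq, hez]
    have hje' : j * e = j := by rw [hj, sub_mul, he.eq, hze]
    have hcomm : e * (1 - j) = (1 - j) * e := by rw [mul_sub, sub_mul, hje, hje', mul_one, one_mul]
    have hte : e * ↑t⁻¹ = ↑t⁻¹ * e := by
      calc e * ↑t⁻¹ = (↑t⁻¹ * (1 - j)) * e * ↑t⁻¹ := by rw [ht2, one_mul]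
      _ = ↑t⁻¹ * (e * (1 - j)) * ↑t⁻¹ := by rw [mul_assoc (↑t⁻¹ : R), ← hcomm]
      _ = ↑t⁻¹ * e * ((1 - j) * ↑t⁻¹) := by noncomm_ring
      _ = ↑t⁻¹ * e := by rw [ht1, mul_one]
    refine ⟨e * ↑t⁻¹, ?_, ?_, ?_, ?_⟩
    · rw [← mul_assoc, he.eq]
    · rw [mul_assoc, ← hte, ← mul_assoc, he.eq]
    · have hz : z = (1 - j) * e := by rw [sub_mul, one_mul, hje', hj]; noncomm_ring
      calc z * (e * ↑t⁻¹) = (1 - j) * (e * (e * ↑t⁻¹)) := by rw [hz, mul_assoc]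
      _ = (1 - j) * (e * ↑t⁻¹) := by rw [← mul_assoc e, he.eq]
      _ = (1 - j) * (↑t⁻¹ * e) := by rw [hte]
      _ = ((1 - j) * ↑t⁻¹) * e := by rw [mul_assoc]
      _ = e := by rw [ht1, one_mul]
    · have hz : z = e * (1 - j) := by rw [mul_sub, mul_one, hje, hj]; noncomm_ring
      calc (e * ↑t⁻¹) * z = ((e * ↑t⁻¹) * e) * (1 - j) := by rw [hz]; noncomm_ring
      _ = (e * (↑t⁻¹ * e)) * (1 - j) := by rw [mul_assoc e (↑t⁻¹ : R) e]
      _ = (e * (e * ↑t⁻¹)) * (1 - j) := by rw [hte]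
      _ = (e * ↑t⁻¹) * (1 - j) := by rw [← mul_assoc, he.eq]
      _ = e * (↑t⁻¹ * (1 - j)) := by rw [mul_assoc]
      _ = e := by rw [ht2, mul_one]
  -- y * w₁ maps to corner identity
  have h1 : jq R (y * w₁) = jq R e := by rw [map_mul, hjw, vwq]
  have h2 : jq R (w₁ * y) = jq R e := by rw [map_mul, hjw, wvq]
  have hw₁e : w₁ * e = w₁ := by rw [hw₁, mul_assoc, he.eq]
  have hew₁ : e * w₁ = w₁ := by rw [hw₁, ← mul_assoc, ← mul_assoc, he.eq]
  have he1 : e * (y * w₁) = y * w₁ := by rw [← mul_assoc, hey]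
  have he2 : (y * w₁) * e = y * w₁ := by rw [mul_assoc, hw₁e]
  have he3 : e * (w₁ * y) = w₁ * y := by rw [← mul_assoc, hew₁]
  have he4 : (w₁ * y) * e = w₁ * y := by rw [mul_assoc, hye]
  obtain ⟨c, hec, hce, hyc, hcy⟩ := main _ he1 he2 h1
  obtain ⟨d, hed, hde, hyd, hdy⟩ := main _ he3 he4 h2
  -- right inverse r := w₁ * c, left inverse l := d * w₁
  set r : R := w₁ * c with hr
  set l : R := d * w₁ with hl
  have hyr : y * r = e := by rw [hr, ← mul_assoc, hyc]
  have hly : l * y = e := by rw [hl, mul_assoc, hdy]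
  have her : e * r = r := by rw [hr, ← mul_assoc, hew₁]
  have hre : r * e = r := by rw [hr, mul_assoc, hce]
  have hle : l * e = l := by rw [hl, mul_assoc, hw₁e]
  have hlr : l = r := by
    calc l = l * (y * r) := by rw [hyr, hle]
    _ = (l * y) * r := (mul_assoc l y r).symm
    _ = r := by rw [hly, her]
  exact ⟨hey, hye, r, her, hre, hyr, by rw [← hlr]; exact hly⟩


lemma M2_config (hK : ∀ h v : R, IsIdempotentElem h → CornerU h v → CornerU h (v - h) → h = 0)
    {p s α β : R} (pp : p * p = p) (ss : s * s = s) (ps : p * s = 0) (sp : s * p = 0)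
    (pα : p * α = α) (αs : α * s = α) (sβ : s * β = β) (βp : β * p = β)
    (αβ : α * β = p) (βα : β * α = s) : p = 0 := by
  have αp : α * p = 0 := by rw [← αs, mul_assoc, sp, mul_zero]
  have sα : s * α = 0 := by rw [← pα, ← mul_assoc, sp, zero_mul]
  have βs : β * s = 0 := by rw [← βp, mul_assoc, ps, mul_zero]
  have pβ : p * β = 0 := by rw [← sβ, ← mul_assoc, ps, zero_mul]
  have αα : α * α = 0 := by
    calc α * α = (α * s) * (p * α) := by rw [αs, pα]
    _ = α * (s * p) * α := by noncomm_ring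
    _ = 0 := by rw [sp]; noncomm_ring
  have ββ : β * β = 0 := by
    calc β * β = (β * p) * (s * β) := by rw [βp, sβ]
    _ = β * (p * s) * β := by noncomm_ring
    _ = 0 := by rw [ps]; noncomm_ring
  have hh : IsIdempotentElem (p + s) := by
    show (p + s) * (p + s) = p + s
    calc (p + s) * (p + s) = p * p + p * s + s * p + s * s := by noncomm_ring
    _ = p + s := by rw [pp, ps, sp, ss]; abel
  have hv : (p + s) * (α + β + s) = α + β + s := by
    calc (p + s) * (α + β + s) = p * α + p * β + p * s + s * α + s * β + s * s := by noncomm_ring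
    _ = α + β + s := by rw [pα, pβ, ps, sα, sβ, ss]; abel
  have vh : (α + β + s) * (p + s) = α + β + s := by
    calc (α + β + s) * (p + s) = α * p + α * s + β * p + β * s + s * p + s * s := by noncomm_ring
    _ = α + β + s := by rw [αp, αs, βp, βs, sp, ss]; abel
  have hw : (p + s) * (α + β - p) = α + β - p := by
    calc (p + s) * (α + β - p) = p * α + p * β - p * p + s * α + s * β - s * p := by noncomm_ring
    _ = α + β - p := by rw [pα, pβ, pp, sα, sβ, sp]; abel
  have wh : (α + β - p) * (p + s) = α + β - p := by
    calc (α + β - p) * (p + s) = α * p + α * s + β * p + β * s - p * p - p * s := by noncomm_ring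
    _ = α + β - p := by rw [αp, αs, βp, βs, pp, ps]; abel
  have vw : (α + β + s) * (α + β - p) = p + s := by
    calc (α + β + s) * (α + β - p)
        = α * α + α * β - α * p + β * α + β * β - β * p + s * α + s * β - s * p := by noncomm_ring
    _ = p + s := by rw [αα, αβ, αp, βα, ββ, βp, sα, sβ, sp]; abel
  have wv : (α + β - p) * (α + β + s) = p + s := by
    calc (α + β - p) * (α + β + s)
        = α * α + α * β + α * s + β * α + β * β + β * s - p * α - p * β - p * s := by noncomm_ring
    _ = p + s := by rw [αα, αβ, αs, βα, ββ, βs, pα, pβ, ps]; abel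
  have c1 : CornerU (p + s) (α + β + s) := ⟨hv, vh, α + β - p, hw, wh, vw, wv⟩
  have hsub : (α + β + s) - (p + s) = α + β - p := by noncomm_ring
  have c2 : CornerU (p + s) ((α + β + s) - (p + s)) := by
    rw [hsub]; exact ⟨hw, wh, α + β + s, hv, vh, wv, vw⟩
  have h0 : p + s = 0 := hK _ _ hh c1 c2
  calc p = p * (p + s) := by rw [mul_add, pp, ps, add_zero]
  _ = 0 := by rw [h0, mul_zero]

lemma no_sq_zero (hsp : ∀ x : R, x ≠ 0 → ∃ b : R, b ≠ 0 ∧ b * x * b = b)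
    (hK : ∀ h v : R, IsIdempotentElem h → CornerU h v → CornerU h (v - h) → h = 0) :
    ∀ n : R, n * n = 0 → n = 0 := by
  intro n hn
  by_contra hne
  obtain ⟨b, hb0, hbnb⟩ := hsp n hne
  have pp : (b * n) * (b * n) = b * n := by
    calc (b * n) * (b * n) = (b * n * b) * n := by noncomm_ring
    _ = b * n := by rw [hbnb]
  have ss₀ : (n * b) * (n * b) = n * b := by
    calc (n * b) * (n * b) = n * (b * n * b) := by noncomm_ring
    _ = n * b := by rw [hbnb]
  have ps₀ : (b * n) * (n * b) = 0 := by
    calc (b * n) * (n * b) = b * (n * n) * b := by noncomm_ring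
    _ = 0 := by rw [hn]; noncomm_ring
  have mp : (n * b * n) * (b * n) = n * b * n := by
    calc (n * b * n) * (b * n) = (n * (b * n * b)) * n := by noncomm_ring
    _ = n * b * n := by rw [hbnb]
  have mb : (n * b * n) * b = n * b := by
    calc (n * b * n) * b = n * (b * n * b) := by noncomm_ring
    _ = n * b := by rw [hbnb]
  have bm : b * (n * b * n) = b * n := by
    calc b * (n * b * n) = (b * n * b) * n := by noncomm_ring
    _ = b * n := by rw [hbnb]
  have pm : (b * n) * (n * b * n) = 0 := by
    calc (b * n) * (n * b * n) = b * (n * n) * (b * n) := by noncomm_ring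
    _ = 0 := by rw [hn]; noncomm_ring
  -- p := b*n, s := n*b - n*b*(b*n), α := b - b*(b*n), β := s * (n*b*n)
  set p : R := b * n with hpdef
  set s₀ : R := n * b with hs₀def
  set m : R := n * b * n with hmdef
  set s : R := s₀ - s₀ * p with hsdef
  set α : R := b - b * p with hαdef
  set β : R := s * m with hβdef
  have ss : s * s = s := by
    rw [hsdef]
    calc (s₀ - s₀ * p) * (s₀ - s₀ * p)
        = s₀ * s₀ - s₀ * (p * s₀) - (s₀ * s₀) * p + s₀ * (p * s₀) * p := by noncomm_ring
    _ = s₀ - s₀ * p := by rw [ss₀, ps₀]; noncomm_ring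
  have psz : p * s = 0 := by
    rw [hsdef]
    calc p * (s₀ - s₀ * p) = p * s₀ - (p * s₀) * p := by noncomm_ring
    _ = 0 := by rw [ps₀]; noncomm_ring
  have spz : s * p = 0 := by
    rw [hsdef]
    calc (s₀ - s₀ * p) * p = s₀ * p - s₀ * (p * p) := by noncomm_ring
    _ = 0 := by rw [pp]; noncomm_ring
  have pα : p * α = α := by
    rw [hαdef]
    calc p * (b - b * p) = (b * n * b) - (b * n * b) * p := by rw [hpdef]; noncomm_ring
    _ = b - b * p := by rw [hbnb]
  have αs : α * s = α := by
    rw [hαdef, hsdef]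
    calc (b - b * p) * (s₀ - s₀ * p)
        = (b * s₀) - (b * s₀) * p - (b * (p * s₀)) + (b * (p * s₀)) * p := by noncomm_ring
    _ = (b * n * b) - (b * n * b) * p - (b * (p * s₀)) + (b * (p * s₀)) * p := by
          rw [hs₀def]; noncomm_ring
    _ = b - b * p := by rw [hbnb, ps₀]; noncomm_ring
  have sβ : s * β = β := by rw [hβdef, ← mul_assoc, ss]
  have βp : β * p = β := by rw [hβdef, mul_assoc, mp]
  have sS₀ : s * s₀ = s₀ := by
    rw [hsdef]
    calc (s₀ - s₀ * p) * s₀ = s₀ * s₀ - s₀ * (p * s₀) := by noncomm_ring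
    _ = s₀ := by rw [ss₀, ps₀]; noncomm_ring
  have αβ : α * β = p := by
    have h1 : α * β = α * m := by
      rw [hβdef, ← mul_assoc, αs]
    rw [h1, hαdef]
    calc (b - b * p) * m = b * m - b * (p * m) := by noncomm_ring
    _ = p := by rw [bm, pm]; noncomm_ring
  have βα : β * α = s := by
    rw [hβdef, hαdef]
    calc (s * m) * (b - b * p) = s * (m * b) - (s * (m * b)) * p := by noncomm_ring
    _ = s * s₀ - (s * s₀) * p := by rw [mb]
    _ = s := by rw [sS₀, hsdef]
  have hp0 : p = 0 := M2_config hK pp ss psz spz pα αs sβ βp αβ βα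
  have hb' := hbnb
  rw [hp0, zero_mul] at hb'
  exact hb0 hb'.symm


lemma idem_central (hns : ∀ n : R, n * n = 0 → n = 0) {e : R} (he : IsIdempotentElem e)
    (x : R) : e * x = x * e := by
  have h1 : e * x = e * x * e := by
    have : (e * x - e * x * e) * (e * x - e * x * e) = 0 := by
      calc (e * x - e * x * e) * (e * x - e * x * e)
          = e * x * (e * x) - e * x * (e * x) * e - e * x * ((e * e) * x)
            + e * x * ((e * e) * x) * e := by noncomm_ring
      _ = 0 := by rw [he.eq]; noncomm_ring
    exact sub_eq_zero.mp (hns _ this)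
  have h2 : x * e = e * x * e := by
    have : (x * e - e * x * e) * (x * e - e * x * e) = 0 := by
      calc (x * e - e * x * e) * (x * e - e * x * e)
          = x * e * (x * e) - x * ((e * e) * x) * e - (e * x * e) * (x * e)
            + e * x * ((e * e) * x) * e := by noncomm_ring
      _ = 0 := by rw [he.eq]; noncomm_ring
    exact sub_eq_zero.mp (hns _ this)
  rw [h1, h2]

lemma corner_unit_of_left_inv (hns : ∀ n : R, n * n = 0 → n = 0) {e x c : R}
    (he : IsIdempotentElem e) (hex : e * x = x) (hxe : x * e = x)
    (hec : e * c = c) (hce : c * e = c) (hcx : c * x = e) : x * c = e := by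
  have hke : (x * c) * e = x * c := by rw [mul_assoc, hce]
  have ekx : (e - x * c) * x = 0 := by
    calc (e - x * c) * x = e * x - x * (c * x) := by noncomm_ring
    _ = 0 := by rw [hex, hcx, hxe, sub_self]
  have hxek : x * (e - x * c) = 0 := by
    apply hns
    calc (x * (e - x * c)) * (x * (e - x * c)) = x * ((e - x * c) * x) * (e - x * c) := by
          noncomm_ring
    _ = 0 := by rw [ekx]; noncomm_ring
  have hzx : ((e - x * c) * c) * x = e - x * c := by
    calc ((e - x * c) * c) * x = (e - x * c) * (c * x) := by rw [mul_assoc]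
    _ = e * e - (x * c) * e := by rw [hcx]; noncomm_ring
    _ = e - x * c := by rw [he.eq, hke]
  have hxz : x * ((e - x * c) * c) = 0 := by rw [← mul_assoc, hxek, zero_mul]
  have h2 : (e - x * c) * (e - x * c) = 0 := by
    calc (e - x * c) * (e - x * c) = (((e - x * c) * c) * x) * (((e - x * c) * c) * x) := by
          rw [hzx]
    _ = ((e - x * c) * c) * (x * ((e - x * c) * c)) * x := by noncomm_ring
    _ = 0 := by rw [hxz]; noncomm_ring
  have := sub_eq_zero.mp (hns _ h2)
  exact this.symm

lemma cornerU_neg {h x : R} (hc : CornerU h x) : CornerU h (-x) := by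
  obtain ⟨h1, h2, w, h3, h4, h5, h6⟩ := hc
  exact ⟨by rw [mul_neg, h1], by rw [neg_mul, h2], -w, by rw [mul_neg, h3],
    by rw [neg_mul, h4], by rw [neg_mul_neg, h5], by rw [neg_mul_neg, h6]⟩

lemma boolean_of (hsp : ∀ x : R, x ≠ 0 → ∃ b : R, b ≠ 0 ∧ b * x * b = b)
    (hns : ∀ n : R, n * n = 0 → n = 0)
    (hK : ∀ h v : R, IsIdempotentElem h → CornerU h v → CornerU h (v - h) → h = 0) :
    ∀ a : R, a * a = a := by
  intro a
  by_contra hne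
  obtain ⟨b, hb0, hbb⟩ := hsp (a - a * a) (sub_ne_zero.mpr (fun h => hne h.symm))
  obtain ⟨e, hedef⟩ : ∃ e : R, e = b * (a - a * a) := ⟨_, rfl⟩
  have he : IsIdempotentElem e := by
    show e * e = e
    rw [hedef]
    calc (b * (a - a * a)) * (b * (a - a * a)) = (b * (a - a * a) * b) * (a - a * a) := by
          noncomm_ring
    _ = b * (a - a * a) := by rw [hbb]
  have hce : ∀ y : R, e * y = y * e := idem_central hns he
  have hene : e ≠ 0 := by
    intro h0
    have hb' := hbb
    rw [show b * (a - a * a) = (0 : R) from hedef ▸ h0, zero_mul] at hb'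
    exact hb0 hb'.symm
  have hae : a * e = e * a := (hce a).symm
  have hbe : b * e = e * b := (hce b).symm
  have hcx : (e * b) * (e * (a - a * a)) = e := by
    calc (e * b) * (e * (a - a * a)) = e * (b * e) * (a - a * a) := by noncomm_ring
    _ = e * (e * b) * (a - a * a) := by rw [hbe]
    _ = (e * e) * (b * (a - a * a)) := by noncomm_ring
    _ = e * (b * (a - a * a)) := by rw [he.eq]
    _ = e * e := by rw [← hedef]
    _ = e := he.eq
  have hex : e * (e * (a - a * a)) = e * (a - a * a) := by rw [← mul_assoc, he.eq]
  have hxe : (e * (a - a * a)) * e = e * (a - a * a) := by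
    calc (e * (a - a * a)) * e = e * ((a - a * a) * e) := by rw [mul_assoc]
    _ = e * (e * (a - a * a)) := by rw [← hce]
    _ = e * (a - a * a) := hex
  have hec : e * (e * b) = e * b := by rw [← mul_assoc, he.eq]
  have hce' : (e * b) * e = e * b := by
    calc (e * b) * e = e * (b * e) := by rw [mul_assoc]
    _ = e * (e * b) := by rw [hbe]
    _ = e * b := hec
  have hxc : (e * (a - a * a)) * (e * b) = e :=
    corner_unit_of_left_inv hns he hex hxe hec hce' hcx
  have hv1 : (e * a) * (e - e * a) = e * (a - a * a) := by
    calc (e * a) * (e - e * a) = e * (a * e) - e * (a * e) * a := by noncomm_ring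
    _ = e * (e * a) - e * (e * a) * a := by rw [hae]
    _ = (e * e) * a - (e * e) * (a * a) := by noncomm_ring
    _ = e * (a - a * a) := by rw [he.eq]; noncomm_ring
  have hv2 : (e - e * a) * (e * a) = e * (a - a * a) := by
    calc (e - e * a) * (e * a) = (e * e) * a - e * (a * e) * a := by noncomm_ring
    _ = (e * e) * a - e * (e * a) * a := by rw [hae]
    _ = (e * e) * a - (e * e) * (a * a) := by noncomm_ring
    _ = e * (a - a * a) := by rw [he.eq]; noncomm_ring
  have hev : e * (e * a) = e * a := by rw [← mul_assoc, he.eq]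
  have hve : (e * a) * e = e * a := by
    calc (e * a) * e = e * (a * e) := by rw [mul_assoc]
    _ = e * (e * a) := by rw [hae]
    _ = e * a := hev
  have hev₂ : e * (e - e * a) = e - e * a := by rw [mul_sub, ← mul_assoc, he.eq]
  have hv₂e : (e - e * a) * e = e - e * a := by rw [sub_mul, he.eq, hve]
  -- CornerU e (e*a) with witness w := (e - e*a)*(e*b)
  have c1 : CornerU e (e * a) := by
    refine ⟨hev, hve, (e - e * a) * (e * b), ?_, ?_, ?_, ?_⟩
    · rw [← mul_assoc, hev₂]
    · rw [mul_assoc, hce']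
    · rw [← mul_assoc, hv1, hxc]
    · -- left inverse l := (e*b)*(e - e*a) equals w
      have hlv : ((e * b) * (e - e * a)) * (e * a) = e := by rw [mul_assoc, hv2, hcx]
      have hvw : (e * a) * ((e - e * a) * (e * b)) = e := by rw [← mul_assoc, hv1, hxc]
      have hle : ((e * b) * (e - e * a)) * e = (e * b) * (e - e * a) := by
        rw [mul_assoc, hv₂e]
      have hew : e * ((e - e * a) * (e * b)) = (e - e * a) * (e * b) := by
        rw [← mul_assoc, hev₂]
      have : (e * b) * (e - e * a) = (e - e * a) * (e * b) := by
        calc (e * b) * (e - e * a)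
            = ((e * b) * (e - e * a)) * ((e * a) * ((e - e * a) * (e * b))) := by rw [hvw, hle]
        _ = (((e * b) * (e - e * a)) * (e * a)) * ((e - e * a) * (e * b)) :=
              (mul_assoc ((e * b) * (e - e * a)) (e * a) ((e - e * a) * (e * b))).symm
        _ = e * ((e - e * a) * (e * b)) := by rw [hlv]
        _ = (e - e * a) * (e * b) := hew
      rw [← this, hlv]
  have c2 : CornerU e (e - e * a) := by
    refine ⟨hev₂, hv₂e, (e * a) * (e * b), ?_, ?_, ?_, ?_⟩
    · rw [← mul_assoc, hev]
    · rw [mul_assoc, hce']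
    · rw [← mul_assoc, hv2, hxc]
    · have hlv : ((e * b) * (e * a)) * (e - e * a) = e := by rw [mul_assoc, hv1, hcx]
      have hvw : (e - e * a) * ((e * a) * (e * b)) = e := by rw [← mul_assoc, hv2, hxc]
      have hle : ((e * b) * (e * a)) * e = (e * b) * (e * a) := by rw [mul_assoc, hve]
      have hew : e * ((e * a) * (e * b)) = (e * a) * (e * b) := by rw [← mul_assoc, hev]
      have : (e * b) * (e * a) = (e * a) * (e * b) := by
        calc (e * b) * (e * a)
            = ((e * b) * (e * a)) * ((e - e * a) * ((e * a) * (e * b))) := by rw [hvw, hle]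
        _ = (((e * b) * (e * a)) * (e - e * a)) * ((e * a) * (e * b)) :=
              (mul_assoc ((e * b) * (e * a)) (e - e * a) ((e * a) * (e * b))).symm
        _ = e * ((e * a) * (e * b)) := by rw [hlv]
        _ = (e * a) * (e * b) := hew
      rw [← this, hlv]
  have c2' : CornerU e ((e * a) - e) := by
    have := cornerU_neg c2
    rwa [neg_sub] at this
  exact hene (hK e (e * a) he c1 c2')

lemma inv_comm {U : Rˣ} {c : R} (h : ↑U * c = c * ↑U) : (↑U⁻¹ : R) * c = c * ↑U⁻¹ := by
  calc (↑U⁻¹ : R) * c = ↑U⁻¹ * (c * (↑U * ↑U⁻¹)) := by rw [U.mul_inv, mul_one]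
  _ = ↑U⁻¹ * ((c * ↑U) * ↑U⁻¹) := by rw [mul_assoc]
  _ = ↑U⁻¹ * ((↑U * c) * ↑U⁻¹) := by rw [h]
  _ = (↑U⁻¹ * ↑U) * (c * ↑U⁻¹) := by noncomm_ring
  _ = c * ↑U⁻¹ := by rw [U.inv_mul, one_mul]

lemma sce {x f : R} (hf : IsIdempotentElem f) (hu : IsUnit (x - f)) (hcomm : x * f = f * x) :
    ∃ t : R, (1 - f = (t * (1 - f)) * x) ∧ (1 - f = x * ((1 - f) * t)) ∧
      (f = -((f * t) * (1 - x))) ∧ (f = -((1 - x) * (f * t))) := by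
  obtain ⟨U, hU⟩ := hu
  have hUf : ↑U * f = f * ↑U := by
    rw [hU]
    calc (x - f) * f = x * f - f * f := by noncomm_ring
    _ = f * x - f * f := by rw [hcomm]
    _ = f * (x - f) := by noncomm_ring
  have hUx : ↑U * x = x * ↑U := by
    rw [hU]
    calc (x - f) * x = x * x - f * x := by noncomm_ring
    _ = x * x - x * f := by rw [hcomm]
    _ = x * (x - f) := by noncomm_ring
  have htf : (↑U⁻¹ : R) * f = f * ↑U⁻¹ := inv_comm hUf
  have htx : (↑U⁻¹ : R) * x = x * ↑U⁻¹ := inv_comm hUx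
  have hfx : f * x = x * f := hcomm.symm
  set t : R := (↑U⁻¹ : R) with htdef
  have ht1f : t * (1 - f) = (1 - f) * t := by
    rw [mul_sub, sub_mul, mul_one, one_mul, htf]
  have k1 : (1 - f) * ↑U = (1 - f) * x := by
    rw [hU]
    calc (1 - f) * (x - f) = (1 - f) * x - (f - f * f) := by noncomm_ring
    _ = (1 - f) * x := by rw [hf.eq]; noncomm_ring
  have base1 : 1 - f = ((1 - f) * x) * t := by
    calc 1 - f = ((1 - f) * ↑U) * t := by rw [mul_assoc, U.mul_inv, mul_one]
    _ = ((1 - f) * x) * t := by rw [k1]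
  have k2 : f * ↑U = -(f * (1 - x)) := by
    rw [hU]
    calc f * (x - f) = f * x - f * f := by noncomm_ring
    _ = f * x - f := by rw [hf.eq]
    _ = -(f * (1 - x)) := by noncomm_ring
  have base2 : f = -((f * (1 - x)) * t) := by
    calc f = (f * ↑U) * t := by rw [mul_assoc, U.mul_inv, mul_one]
    _ = -(f * (1 - x)) * t := by rw [k2]
    _ = -((f * (1 - x)) * t) := by noncomm_ring
  have ht1x : t * (1 - x) = (1 - x) * t := by
    rw [mul_sub, sub_mul, mul_one, one_mul, htx]
  have hf1x : f * (1 - x) = (1 - x) * f := by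
    rw [mul_sub, sub_mul, mul_one, one_mul, hfx]
  have h1fx : (1 - f) * x = x * (1 - f) := by
    rw [sub_mul, mul_sub, mul_one, one_mul, hfx]
  refine ⟨t, ?_, ?_, ?_, ?_⟩
  · calc 1 - f = ((1 - f) * x) * t := base1
    _ = (1 - f) * (x * t) := by rw [mul_assoc]
    _ = (1 - f) * (t * x) := by rw [← htx]
    _ = ((1 - f) * t) * x := by rw [mul_assoc]
    _ = (t * (1 - f)) * x := by rw [ht1f]
  · calc 1 - f = ((1 - f) * x) * t := base1
    _ = ((x * (1 - f))) * t := by rw [h1fx]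
    _ = x * ((1 - f) * t) := by rw [mul_assoc]
  · calc f = -((f * (1 - x)) * t) := base2
    _ = -(f * ((1 - x) * t)) := by rw [mul_assoc]
    _ = -(f * (t * (1 - x))) := by rw [← ht1x]
    _ = -((f * t) * (1 - x)) := by rw [mul_assoc]
  · calc f = -((f * (1 - x)) * t) := base2
    _ = -(((1 - x) * f) * t) := by rw [hf1x]
    _ = -((1 - x) * (f * t)) := by rw [mul_assoc]

lemma usc_lift (h : IsUSCRing R) : IdempotentsLiftJac R := by
  intro a haJ
  rw [pow_two] at haJ
  obtain ⟨f, ⟨hf, hu, hcomm⟩, -⟩ := h a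
  obtain ⟨t, h1, h2, h3, h4⟩ := sce hf hu hcomm
  refine ⟨1 - f, hf.one_sub, ?_⟩
  have m1 : f * a ∈ jacobsonRad R := by
    have hfa : f * a = -((f * t) * (a - a * a)) := by
      conv_lhs => rw [h3]
      noncomm_ring
    rw [hfa]
    exact (jacobsonRad R).neg_mem ((jacobsonRad R).mul_mem_left _ _ haJ)
  have m2 : (1 - f) * (1 - a) ∈ jacobsonRad R := by
    have hfa : (1 - f) * (1 - a) = (t * (1 - f)) * (a - a * a) := by
      conv_lhs => rw [h1]
      noncomm_ring
    rw [hfa]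
    exact (jacobsonRad R).mul_mem_left _ _ haJ
  have key : a - (1 - f) = f * a - (1 - f) * (1 - a) := by noncomm_ring
  rw [key]
  exact (jacobsonRad R).sub_mem m1 m2

lemma usc_semileft (h : IsUSCRing R) (I : Ideal R)
    (hI : ¬ (I : Set R) ⊆ (jacobsonRad R : Set R)) :
    ∃ e ∈ I, e ≠ 0 ∧ IsIdempotentElem e := by
  obtain ⟨a, haI, haJ⟩ := Set.not_subset.mp hI
  obtain ⟨y, hy⟩ := not_mem_jac haJ
  obtain ⟨f, ⟨hf, hu, hcomm⟩, -⟩ := h (y * a)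
  obtain ⟨t, h1, -, -, -⟩ := sce hf hu hcomm
  refine ⟨1 - f, ?_, ?_, hf.one_sub⟩
  · rw [h1]
    exact I.mul_mem_left _ (I.mul_mem_left _ (show a ∈ I from haI))
  · intro h0
    apply hy
    have hf1 : f = 1 := by rwa [sub_eq_zero, eq_comm] at h0
    have : IsUnit (y * a - 1) := by rwa [hf1] at hu
    have := this.neg
    rwa [neg_sub] at this
lemma usc_semiright (h : IsUSCRing R) (I : Submodule Rᵐᵒᵖ R)
    (hI : ¬ (I : Set R) ⊆ (jacobsonRad R : Set R)) :
    ∃ e ∈ I, e ≠ 0 ∧ IsIdempotentElem e := by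
  obtain ⟨a, haI, haJ⟩ := Set.not_subset.mp hI
  obtain ⟨y, hy⟩ := not_mem_jac' haJ
  obtain ⟨f, ⟨hf, hu, hcomm⟩, -⟩ := h (a * y)
  obtain ⟨t, -, h2, -, -⟩ := sce hf hu hcomm
  refine ⟨1 - f, ?_, ?_, hf.one_sub⟩
  · rw [h2]
    have h5 : a * (y * ((1 - f) * t)) ∈ I :=
      I.smul_mem (MulOpposite.op (y * ((1 - f) * t))) (show a ∈ I from haI)
    rwa [← mul_assoc] at h5
  · intro h0
    apply hy
    have hf1 : f = 1 := by rwa [sub_eq_zero, eq_comm] at h0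
    have : IsUnit (a * y - 1) := by rwa [hf1] at hu
    have := this.neg
    rwa [neg_sub] at this

lemma quot_K (hC : IsCUSC R) (hL : IdempotentsLiftJac R) :
    ∀ h v : JacQuot R, IsIdempotentElem h → CornerU h v → CornerU h (v - h) → h = 0 := by
  intro h v hh h1 h2
  obtain ⟨a, ha⟩ := jq_surj h
  have haa : a - a ^ 2 ∈ jacobsonRad R := by
    rw [← jq_eq_zero_iff, map_sub, map_pow, ha, sq, hh.eq, sub_self]
  obtain ⟨e, he, hae⟩ := hL a haa
  have hje : jq R e = h := by
    have h0 : jq R (a - e) = 0 := jq_eq_zero_iff.mpr hae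
    rw [map_sub, sub_eq_zero] at h0
    rw [← h0, ha]
  obtain ⟨x₀, hx₀⟩ := jq_surj v
  have hjy : jq R (e * x₀ * e) = v := by
    rw [map_mul, map_mul, hx₀, hje]
    calc h * v * h = v * h := by rw [h1.1]
    _ = v := h1.2.1
  have hey : e * (e * x₀ * e) = e * x₀ * e := by rw [← mul_assoc, ← mul_assoc, he.eq]
  have hye : (e * x₀ * e) * e = e * x₀ * e := by rw [mul_assoc, he.eq]
  have c1 : CornerU e (e * x₀ * e) := corner_unit_lift he hey hye (by rw [hje, hjy]; exact h1)
  have c2 : CornerU e (e * x₀ * e - e) := by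
    apply corner_unit_lift he (by rw [mul_sub, hey, he.eq]) (by rw [sub_mul, hye, he.eq])
    rw [hje, map_sub, hjy, hje]
    exact h2
  have he0 := cusc_corner hC he c1 c2
  rw [← hje, he0, map_zero]

lemma quot_sp
    (hS : ∀ I : Ideal R, ¬ (I : Set R) ⊆ (jacobsonRad R : Set R) →
      ∃ e ∈ I, e ≠ 0 ∧ IsIdempotentElem e) :
    ∀ x : JacQuot R, x ≠ 0 → ∃ b : JacQuot R, b ≠ 0 ∧ b * x * b = b := by
  intro x hx
  obtain ⟨x₀, hx₀⟩ := jq_surj x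
  have hxJ : x₀ ∉ jacobsonRad R := by
    intro hmem
    exact hx (by rw [← hx₀]; exact jq_eq_zero_iff.mpr hmem)
  obtain ⟨e, heI, hne, he⟩ := hS (Ideal.span {x₀})
    (fun hsub => hxJ (hsub (Ideal.subset_span (Set.mem_singleton _))))
  obtain ⟨r, hr⟩ := Ideal.mem_span_singleton'.mp heI
  have hbx : (e * r) * x₀ = e := by rw [mul_assoc, hr, he.eq]
  have hbxb : (e * r) * x₀ * (e * r) = e * r := by rw [hbx, ← mul_assoc, he.eq]
  refine ⟨jq R (e * r), ?_, ?_⟩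
  · intro hb0
    have hne2 : jq R e ≠ 0 := fun h0 => hne (idem_mem_jac_eq_zero he (jq_eq_zero_iff.mp h0))
    exact hne2 (by rw [← hbx, map_mul, hb0, zero_mul])
  · rw [← hx₀, ← map_mul, ← map_mul, hbxb]

end AuxUSC

/-- Theorem 3.7: a ring is USC iff it is CUSC and potent. -/
theorem stmt_16 (R : Type*) [Ring R] :
    IsUSCRing R ↔ IsCUSC R ∧ Potent R := by
  constructor
  · intro h
    exact ⟨fun a _ => h a, ⟨⟨usc_semileft h, usc_semiright h⟩, usc_lift h⟩⟩
  · rintro ⟨hC, ⟨hspl, hspr⟩, hL⟩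
    intro a
    apply hC
    have hspq := quot_sp hspl
    have hKq := quot_K hC hL
    have hns := no_sq_zero hspq hKq
    have hbool := boolean_of hspq hns hKq
    have haJ : a - a ^ 2 ∈ jacobsonRad R := by
      rw [← jq_eq_zero_iff, map_sub, map_pow, sq, hbool (jq R a), sub_self]
    obtain ⟨e, he, hae⟩ := hL a haJ
    refine ⟨1 - e, he.one_sub, ?_⟩
    have hunit : IsUnit (2 * e - 1) := by
      refine isUnit_iff_exists.mpr ⟨2 * e - 1, ?_, ?_⟩ <;>
      · calc (2 * e - 1) * (2 * e - 1) = 4 * (e * e) - 4 * e + 1 := by noncomm_ring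
        _ = 1 := by rw [he.eq]; noncomm_ring
    have hfin := unit_add_jac hunit hae
    rwa [show 2 * e - 1 + (a - e) = a - (1 - e) from by noncomm_ring] at hfin
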